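/- Let μ > 1, let 0 < α₁ < α₂ < 1 and c₁, c₂ > 0 be real numbers, and let R₁, R₂ : ℕ → ℝ satisfy R_m(n)·n^μ·α_m^n → c_m as n → ∞ for m = 1, 2. Set λ := ln(α₁)/ln(α₂) (so λ > 1) and x_n := ⌊n·(λ − 1)⌋. Then (c₂/c₁)·λ^{−μ}·α₂ ≤ liminf_{n→∞} R₂(n + x_n)/R₁(n) and limsup_{n→∞} R₂(n + x_n)/R₁(n) ≤ (c₂/c₁)·λ^{−μ}. In particular, for all sufficiently large n the two sequences R₁(n) and R₂(n + x_n) agree up to positive bounded multiplicative factors. -/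

import Mathlib

open Filter

/- Proposition 2, eq. (5) (the shift result): with `λ = ln α₁ / ln α₂ > 1` and
`x_n = ⌊n(λ-1)⌋`, the sequences `R₁(n)` and `R₂(n + x_n)` agree up to bounded
positive multiplicative factors:
`(c₂/c₁)·λ^{-μ}·α₂ ≤ liminf R₂(n+x_n)/R₁(n)` and
`limsup R₂(n+x_n)/R₁(n) ≤ (c₂/c₁)·λ^{-μ}`. -/
theorem stmt_4 (μ α₁ α₂ c₁ c₂ : ℝ) (hμ : 1 < μ)
    (hα₁ : 0 < α₁) (hα : α₁ < α₂) (hα₂ : α₂ < 1) (hc₁ : 0 < c₁) (hc₂ : 0 < c₂)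
    (R₁ R₂ : ℕ → ℝ)
    (h₁ : Tendsto (fun n : ℕ => R₁ n * (n : ℝ) ^ μ * α₁ ^ n) atTop (nhds c₁))
    (h₂ : Tendsto (fun n : ℕ => R₂ n * (n : ℝ) ^ μ * α₂ ^ n) atTop (nhds c₂))
    (lam : ℝ) (hlam : lam = Real.log α₁ / Real.log α₂)
    (x : ℕ → ℕ) (hx : ∀ n, x n = ⌊(n : ℝ) * (lam - 1)⌋₊) :
    c₂ / c₁ * lam ^ (-μ) * α₂ ≤
        atTop.liminf (fun n : ℕ => R₂ (n + x n) / R₁ n) ∧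
      atTop.limsup (fun n : ℕ => R₂ (n + x n) / R₁ n) ≤ c₂ / c₁ * lam ^ (-μ) := by
  have hα₂0 : (0:ℝ) < α₂ := hα₁.trans hα
  have hlog₂ : Real.log α₂ < 0 := Real.log_neg hα₂0 hα₂
  have hlog₁₂ : Real.log α₁ < Real.log α₂ := Real.log_lt_log hα₁ hα
  have hlam1 : 1 < lam := by
    rw [hlam, one_lt_div_of_neg hlog₂]; exact hlog₁₂
  have hlam0 : 0 < lam := lt_trans one_pos hlam1
  -- α₁ ^ n = α₂ ^ (n * lam)  (rpow)
  have hpow : ∀ n : ℕ, (α₁ : ℝ) ^ n = α₂ ^ ((n:ℝ) * lam) := by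
    intro n
    rw [Real.rpow_def_of_pos hα₂0, ← Real.rpow_natCast α₁ n,
      Real.rpow_def_of_pos hα₁]
    congr 1
    rw [hlam]
    field_simp [hlog₂.ne]
  -- floor bounds
  have hxle : ∀ n : ℕ, (x n : ℝ) ≤ (n:ℝ) * (lam - 1) := by
    intro n; rw [hx n]
    have hn0 : (0:ℝ) ≤ (n:ℝ) := Nat.cast_nonneg n
    exact Nat.floor_le (by nlinarith)
  have hxgt : ∀ n : ℕ, (n:ℝ) * (lam - 1) < (x n : ℝ) + 1 := by
    intro n; rw [hx n]; exact Nat.lt_floor_add_one _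
  -- shifted index tends to atTop
  have hshift : Tendsto (fun n : ℕ => n + x n) atTop atTop :=
    tendsto_atTop_mono (fun n => Nat.le_add_right n (x n)) tendsto_id
  set f : ℕ → ℝ := fun n => R₂ (n + x n) * ((n + x n : ℕ) : ℝ) ^ μ * α₂ ^ (n + x n)
    with hf_def
  have hf : Tendsto f atTop (nhds c₂) := h₂.comp hshift
  set g : ℕ → ℝ := fun n => R₁ n * (n : ℝ) ^ μ * α₁ ^ n with hg_def
  have hg : Tendsto g atTop (nhds c₁) := h₁
  -- ratio of indices tends to lam
  have hq : Tendsto (fun n : ℕ => ((n + x n : ℕ) : ℝ) / (n : ℝ)) atTop (nhds lam) := by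
    apply tendsto_of_tendsto_of_tendsto_of_le_of_le'
      (g := fun n : ℕ => lam - 1 / (n:ℝ)) (h := fun _ : ℕ => lam)
    · simpa using (tendsto_const_nhds (x := lam)).sub (tendsto_one_div_atTop_nhds_zero_nat)
    · exact tendsto_const_nhds
    · filter_upwards [eventually_ge_atTop 1] with n hn
      have hn0 : (0:ℝ) < (n:ℝ) := by exact_mod_cast hn
      rw [sub_div' hn0.ne', div_le_div_iff_of_pos_right hn0]
      push_cast
      nlinarith [hxgt n]
    · filter_upwards [eventually_ge_atTop 1] with n hn
      have hn0 : (0:ℝ) < (n:ℝ) := by exact_mod_cast hn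
      rw [div_le_iff₀ hn0]
      push_cast
      nlinarith [hxle n]
  have hqinv : Tendsto (fun n : ℕ => (n : ℝ) / ((n + x n : ℕ) : ℝ)) atTop (nhds lam⁻¹) := by
    have := hq.inv₀ hlam0.ne'
    apply this.congr'
    filter_upwards [eventually_ge_atTop 1] with n hn
    have hn0 : (0:ℝ) < (n:ℝ) := by exact_mod_cast hn
    rw [inv_div]
  -- L sequence
  set L : ℕ → ℝ := fun n => (f n / g n) * ((n : ℝ) / ((n + x n : ℕ) : ℝ)) ^ μ with hL_def
  have hK : Tendsto L atTop (nhds (c₂ / c₁ * lam ^ (-μ))) := by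
    have h1 : Tendsto (fun n => f n / g n) atTop (nhds (c₂ / c₁)) := hf.div hg hc₁.ne'
    have h2 : Tendsto (fun n : ℕ => ((n : ℝ) / ((n + x n : ℕ) : ℝ)) ^ μ) atTop
        (nhds (lam⁻¹ ^ μ)) := by
      apply hqinv.rpow_const
      exact Or.inl (inv_ne_zero hlam0.ne')
    have : lam⁻¹ ^ μ = lam ^ (-μ) := by
      rw [Real.inv_rpow hlam0.le, ← Real.rpow_neg hlam0.le]
    rw [← this]
    exact h1.mul h2
  -- eventual positivity and the key identity with bounds
  have hgev : ∀ᶠ n in atTop, 0 < g n := hg.eventually (eventually_gt_nhds hc₁)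
  have hfev : ∀ᶠ n in atTop, 0 < f n := hf.eventually (eventually_gt_nhds hc₂)
  have key : ∀ᶠ n in atTop, L n * α₂ ≤ R₂ (n + x n) / R₁ n ∧ R₂ (n + x n) / R₁ n ≤ L n := by
    filter_upwards [eventually_ge_atTop 1, hgev, hfev] with n hn hgn hfn
    have hn0 : (0:ℝ) < (n:ℝ) := by exact_mod_cast hn
    have hm0 : (0:ℝ) < ((n + x n : ℕ) : ℝ) := by
      have : (1:ℕ) ≤ n + x n := le_trans hn (Nat.le_add_right n (x n))
      exact_mod_cast this
    have hnp : (0:ℝ) < (n:ℝ) ^ μ := Real.rpow_pos_of_pos hn0 μ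
    have hmp : (0:ℝ) < ((n + x n : ℕ) : ℝ) ^ μ := Real.rpow_pos_of_pos hm0 μ
    have ha1 : (0:ℝ) < α₁ ^ n := pow_pos hα₁ n
    have ha2 : (0:ℝ) < α₂ ^ (n + x n) := pow_pos hα₂0 (n + x n)
    have hR1 : 0 < R₁ n := by
      have hgn' : 0 < R₁ n * ((n:ℝ) ^ μ * α₁ ^ n) := by
        rw [← mul_assoc]; exact hgn
      by_contra h
      push_neg at h
      nlinarith [mul_pos hnp ha1]
    -- identity: R₂ (n+x n)/R₁ n = L n * D n, D n = α₁^n / α₂^(n+x n)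
    set D : ℝ := α₁ ^ n / α₂ ^ (n + x n) with hD_def
    have hid : R₂ (n + x n) / R₁ n = L n * D := by
      simp only [hL_def, hD_def, hf_def, hg_def]
      rw [Real.div_rpow hn0.le hm0.le]
      field_simp
    -- bounds on D : α₂ ≤ D ≤ 1
    have hDeq : D = α₂ ^ ((n:ℝ) * lam - ((n + x n : ℕ) : ℝ)) := by
      rw [hD_def, hpow n, ← Real.rpow_natCast α₂ (n + x n),
        ← Real.rpow_sub hα₂0]
    have ht0 : (0:ℝ) ≤ (n:ℝ) * lam - ((n + x n : ℕ) : ℝ) := by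
      push_cast
      nlinarith [hxle n]
    have ht1 : (n:ℝ) * lam - ((n + x n : ℕ) : ℝ) ≤ 1 := by
      push_cast
      nlinarith [hxgt n]
    have hD1 : D ≤ 1 := by
      rw [hDeq]; exact Real.rpow_le_one hα₂0.le hα₂.le ht0
    have hD2 : α₂ ≤ D := by
      rw [hDeq]
      calc α₂ = α₂ ^ (1:ℝ) := (Real.rpow_one α₂).symm
        _ ≤ α₂ ^ ((n:ℝ) * lam - ((n + x n : ℕ) : ℝ)) :=
          Real.rpow_le_rpow_of_exponent_ge hα₂0 hα₂.le ht1
    have hLpos : 0 < L n := by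
      rw [hL_def]
      have : (0:ℝ) < ((n : ℝ) / ((n + x n : ℕ) : ℝ)) ^ μ :=
        Real.rpow_pos_of_pos (by positivity) μ
      positivity
    constructor
    · rw [hid]
      exact mul_le_mul_of_nonneg_left hD2 hLpos.le
    · rw [hid]
      calc L n * D ≤ L n * 1 := mul_le_mul_of_nonneg_left hD1 hLpos.le
        _ = L n := mul_one _
  have hLa : Tendsto (fun n => L n * α₂) atTop (nhds (c₂ / c₁ * lam ^ (-μ) * α₂)) :=
    hK.mul_const α₂
  have hbound_up : ∀ᶠ n in atTop, R₂ (n + x n) / R₁ n ≤ c₂ / c₁ * lam ^ (-μ) + 1 := by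
    have h' : ∀ᶠ n in atTop, L n ≤ c₂ / c₁ * lam ^ (-μ) + 1 :=
      hK.eventually (eventually_le_nhds (lt_add_one _))
    filter_upwards [key, h'] with n hn hLn
    exact hn.2.trans hLn
  have hbound_lo : ∀ᶠ n in atTop, c₂ / c₁ * lam ^ (-μ) * α₂ - 1 ≤ R₂ (n + x n) / R₁ n := by
    have h' : ∀ᶠ n in atTop, c₂ / c₁ * lam ^ (-μ) * α₂ - 1 ≤ L n * α₂ :=
      hLa.eventually (eventually_ge_nhds (by linarith [sub_lt_self (c₂ / c₁ * lam ^ (-μ) * α₂) one_pos]))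
    filter_upwards [key, h'] with n hn hLn
    exact hLn.trans hn.1
  constructor
  · rw [show c₂ / c₁ * lam ^ (-μ) * α₂ = atTop.liminf (fun n => L n * α₂) from
      (hLa.liminf_eq).symm]
    exact liminf_le_liminf (key.mono fun n h => h.1) hLa.isBoundedUnder_ge
      (isCoboundedUnder_ge_of_eventually_le atTop hbound_up)
  · rw [show c₂ / c₁ * lam ^ (-μ) = atTop.limsup L from hK.limsup_eq.symm]
    exact limsup_le_limsup (key.mono fun n h => h.2)
      (isCoboundedUnder_le_of_eventually_le atTop hbound_lo) hK.isBoundedUnder_le
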